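/- The maps Δ, ε, S make D(G) a Hopf algebra: Δ and ε are unital algebra homomorphisms, Δ is coassociative ((Δ⊗id)∘Δ = (id⊗Δ)∘Δ), ε is a counit for Δ ((ε⊗id)∘Δ = (id⊗ε)∘Δ = id), and S satisfies the antipode identities m∘(S⊗id)∘Δ = m∘(id⊗S)∘Δ = ε(·)·1, where m denotes the multiplication map. -/

import Mathlib

noncomputable section

/- An element of the quantum double `D(G)` is a complex-valued function on `G × G`
(the coefficients in the basis `{V_g U_h}`); similarly an element of `D(G) ⊗ D(G)` is a
function on `(G × G) × (G × G)`, and an element of `D(G)⊗D(G)⊗D(G)` a function on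
`(G × G) × (G × G) × (G × G)`. -/

/-- The unit `1 = ∑ g, V_g U_e` of `D(G)`. -/
def done (G : Type*) [Group G] [DecidableEq G] : G × G → ℂ :=
  fun p => if p.2 = 1 then 1 else 0

/-- The unit `1 ⊗ 1` of `D(G) ⊗ D(G)`. -/
def done2 (G : Type*) [Group G] [DecidableEq G] : (G × G) × (G × G) → ℂ :=
  fun p => done G p.1 * done G p.2

/-- The multiplication of `D(G)`, determined on the basis by
`(V_{g₁} U_{h₁})·(V_{g₂} U_{h₂}) = δ_{g₁, h₁ g₂ h₁⁻¹} V_{g₁} U_{h₁ h₂}`. -/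
def dmul {G : Type*} [Group G] [Fintype G] (x y : G × G → ℂ) : G × G → ℂ :=
  fun p => ∑ h : G, x (p.1, h) * y (h⁻¹ * p.1 * h, h⁻¹ * p.2)

/-- The multiplication of `D(G) ⊗ D(G)` (the multiplication of `D(G)` in each leg). -/
def dmul2 {G : Type*} [Group G] [Fintype G]
    (x y : (G × G) × (G × G) → ℂ) : (G × G) × (G × G) → ℂ :=
  fun p => ∑ h : G, ∑ k : G,
    x ((p.1.1, h), (p.2.1, k)) *
    y ((h⁻¹ * p.1.1 * h, h⁻¹ * p.1.2), (k⁻¹ * p.2.1 * k, k⁻¹ * p.2.2))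

/-- The coproduct `Δ` of `D(G)`, determined on the basis by
`Δ(V_g U_h) = ∑_{a b = g} V_a U_h ⊗ V_b U_h`. -/
def dcop {G : Type*} [Group G] [DecidableEq G]
    (x : G × G → ℂ) : (G × G) × (G × G) → ℂ :=
  fun p => if p.1.2 = p.2.2 then x (p.1.1 * p.2.1, p.1.2) else 0

/-- The counit `ε` of `D(G)`, determined on the basis by `ε(V_g U_h) = δ_{g,e}`. -/
def deps {G : Type*} [Group G] [Fintype G] (x : G × G → ℂ) : ℂ :=
  ∑ h : G, x (1, h)

/-- The map `Δ ⊗ id : D(G)⊗D(G) → D(G)⊗D(G)⊗D(G)`. -/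
def copId {G : Type*} [Group G] [DecidableEq G]
    (x : (G × G) × (G × G) → ℂ) : (G × G) × (G × G) × (G × G) → ℂ :=
  fun p => if p.1.2 = p.2.1.2 then x ((p.1.1 * p.2.1.1, p.1.2), p.2.2) else 0

/-- The map `id ⊗ Δ : D(G)⊗D(G) → D(G)⊗D(G)⊗D(G)`. -/
def idCop {G : Type*} [Group G] [DecidableEq G]
    (x : (G × G) × (G × G) → ℂ) : (G × G) × (G × G) × (G × G) → ℂ :=
  fun p => if p.2.1.2 = p.2.2.2 then x (p.1, (p.2.1.1 * p.2.2.1, p.2.1.2)) else 0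

/-- The map `ε ⊗ id : D(G)⊗D(G) → ℂ⊗D(G) = D(G)`. -/
def epsId {G : Type*} [Group G] [Fintype G]
    (x : (G × G) × (G × G) → ℂ) : G × G → ℂ :=
  fun p => ∑ h : G, x ((1, h), p)

/-- The map `id ⊗ ε : D(G)⊗D(G) → D(G)⊗ℂ = D(G)`. -/
def idEps {G : Type*} [Group G] [Fintype G]
    (x : (G × G) × (G × G) → ℂ) : G × G → ℂ :=
  fun p => ∑ h : G, x (p, (1, h))

/-- The multiplication map `m : D(G)⊗D(G) → D(G)`. -/
def dmulmap {G : Type*} [Group G] [Fintype G]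
    (x : (G × G) × (G × G) → ℂ) : G × G → ℂ :=
  fun p => ∑ h : G, x ((p.1, h), (h⁻¹ * p.1 * h, h⁻¹ * p.2))

/-- The map `S ⊗ id : D(G)⊗D(G) → D(G)⊗D(G)`, where `S` is the antipode determined on
the basis by `S(V_g U_h) = V_{h⁻¹ g⁻¹ h} U_{h⁻¹}`. -/
def antipId {G : Type*} [Group G]
    (x : (G × G) × (G × G) → ℂ) : (G × G) × (G × G) → ℂ :=
  fun p => x ((p.1.2⁻¹ * p.1.1⁻¹ * p.1.2, p.1.2⁻¹), p.2)

/-- The map `id ⊗ S : D(G)⊗D(G) → D(G)⊗D(G)`. -/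
def idAntip {G : Type*} [Group G]
    (x : (G × G) × (G × G) → ℂ) : (G × G) × (G × G) → ℂ :=
  fun p => x (p.1, (p.2.2⁻¹ * p.2.1⁻¹ * p.2.2, p.2.2⁻¹))


set_option linter.unusedSectionVars false

section Aux
variable {G : Type*} [Group G] [Fintype G] [DecidableEq G]

lemma aux1 (x y : G × G → ℂ) : dcop (dmul x y) = dmul2 (dcop x) (dcop y) := by
  funext p
  rw [eq_comm]
  show (∑ h : G, ∑ k : G, _) = _
  simp only [dcop, dmul, dmul2]
  rw [show (if p.1.2 = p.2.2 then
      ∑ h : G, x (p.1.1 * p.2.1, h) * y (h⁻¹ * (p.1.1 * p.2.1) * h, h⁻¹ * p.1.2) else 0)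
      = ∑ h : G, (if p.1.2 = p.2.2 then
        x (p.1.1 * p.2.1, h) * y (h⁻¹ * (p.1.1 * p.2.1) * h, h⁻¹ * p.1.2) else 0) by
    split_ifs <;> simp]
  refine Finset.sum_congr rfl fun h _ => ?_
  rw [Finset.sum_eq_single h]
  · simp only [mul_right_inj]
    split_ifs <;> simp [mul_assoc]
  · intro k _ hk
    simp [Ne.symm hk]
  · simp

lemma aux2 : dcop (done G) = done2 G := by
  funext p
  simp only [dcop, done, done2]
  split_ifs <;> simp_all

lemma aux3 (c : ℂ) (x y : G × G → ℂ) : dcop (c • x + y) = c • dcop x + dcop y := by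
  funext p
  simp only [dcop, Pi.add_apply, Pi.smul_apply, smul_eq_mul]
  split_ifs <;> simp

lemma aux4 (x y : G × G → ℂ) : deps (dmul x y) = deps x * deps y := by
  unfold deps dmul
  rw [Finset.sum_comm]
  have key : ∀ k : G, (∑ h : G, x (1, k) *
      y (k⁻¹ * 1 * k, k⁻¹ * h)) = x (1, k) * ∑ h : G, y (1, h) := by
    intro k
    rw [← Finset.mul_sum]
    congr 1
    exact Fintype.sum_equiv (Equiv.mulLeft k⁻¹) _ _ (fun h => by simp)
  simp only [key, ← Finset.sum_mul]

lemma aux5 : deps (done G) = 1 := by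
  simp [deps, done]

lemma aux6 (c : ℂ) (x y : G × G → ℂ) : deps (c • x + y) = c * deps x + deps y := by
  simp [deps, Finset.mul_sum, Finset.sum_add_distrib]

lemma aux7 (x : G × G → ℂ) : copId (dcop x) = idCop (dcop x) := by
  funext p
  simp only [copId, idCop, dcop, mul_assoc]
  split_ifs <;> simp_all

lemma aux8 (x : G × G → ℂ) : epsId (dcop x) = x := by
  funext p
  simp [epsId, dcop]

lemma aux9 (x : G × G → ℂ) : idEps (dcop x) = x := by
  funext p
  simp [idEps, dcop]

lemma aux10 (x : G × G → ℂ) : dmulmap (antipId (dcop x)) = deps x • done G := by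
  funext p
  simp only [dmulmap, antipId, dcop, deps, done, Pi.smul_apply, smul_eq_mul]
  have key : ∀ h : G, (h⁻¹ = h⁻¹ * p.2) = (p.2 = 1) := by
    intro h
    rw [eq_iff_iff, eq_comm, mul_eq_left]
  simp only [key]
  split_ifs with h
  · rw [mul_one]
    refine Fintype.sum_equiv (Equiv.inv G) _ _ (fun k => ?_)
    have : k⁻¹ * p.1⁻¹ * k * (k⁻¹ * p.1 * k) = 1 := by group
    simp [this]
  · simp

lemma aux11 (x : G × G → ℂ) : dmulmap (idAntip (dcop x)) = deps x • done G := by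
  funext p
  simp only [dmulmap, idAntip, dcop, deps, done, Pi.smul_apply, smul_eq_mul]
  have key : ∀ h : G, (h = (h⁻¹ * p.2)⁻¹) = (p.2 = 1) := by
    intro h
    rw [eq_iff_iff, mul_inv_rev, inv_inv, right_eq_mul, inv_eq_one]
  simp only [key]
  split_ifs with h
  · rw [mul_one]
    refine Finset.sum_congr rfl fun k _ => ?_
    have : p.1 * ((k⁻¹ * p.2)⁻¹ * (k⁻¹ * p.1 * k)⁻¹ * (k⁻¹ * p.2)) = 1 := by
      rw [h]; group
    rw [this]
  · simp

end Aux

/-- STATEMENT 3: the maps `Δ`, `ε`, `S` make `D(G)` a Hopf algebra: `Δ` and `ε` are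
unital algebra homomorphisms, `Δ` is coassociative, `ε` is a counit for `Δ`, and `S`
satisfies the antipode identities `m∘(S⊗id)∘Δ = m∘(id⊗S)∘Δ = ε(·)·1`. -/
theorem statement3 (G : Type*) [Group G] [Fintype G] [DecidableEq G] :
    -- `Δ` is a unital algebra homomorphism
    (∀ x y : G × G → ℂ, dcop (dmul x y) = dmul2 (dcop x) (dcop y)) ∧
    dcop (done G) = done2 G ∧
    (∀ (c : ℂ) (x y : G × G → ℂ), dcop (c • x + y) = c • dcop x + dcop y) ∧
    -- `ε` is a unital algebra homomorphism
    (∀ x y : G × G → ℂ, deps (dmul x y) = deps x * deps y) ∧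
    deps (done G) = 1 ∧
    (∀ (c : ℂ) (x y : G × G → ℂ), deps (c • x + y) = c * deps x + deps y) ∧
    -- coassociativity `(Δ⊗id)∘Δ = (id⊗Δ)∘Δ`
    (∀ x : G × G → ℂ, copId (dcop x) = idCop (dcop x)) ∧
    -- counit property `(ε⊗id)∘Δ = (id⊗ε)∘Δ = id`
    (∀ x : G × G → ℂ, epsId (dcop x) = x) ∧
    (∀ x : G × G → ℂ, idEps (dcop x) = x) ∧
    -- antipode property `m∘(S⊗id)∘Δ = m∘(id⊗S)∘Δ = ε(·)·1`
    (∀ x : G × G → ℂ, dmulmap (antipId (dcop x)) = deps x • done G) ∧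
    (∀ x : G × G → ℂ, dmulmap (idAntip (dcop x)) = deps x • done G) := by
  exact ⟨aux1, aux2, aux3, aux4, aux5, aux6, aux7, aux8, aux9, aux10, aux11⟩
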